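/- arXiv:1110.1880 — 5 statements merged into one kernel-verified Lean document; each statement's English description precedes it below -/
import Mathlib

section
/- Let π be a probability density on Θ ⊆ ℝ^d, h : Θ → ℝ measurable with ∫ |h| π dθ > 0, and q a density with supp(π) ⊆ supp(q). Then the variance under q of the estimator w(θ)h(θ), with w = π/q, satisfies var_q[wh] ≥ (∫ |h(θ)| π(θ) dθ)^2 − (∫ h(θ) π(θ) dθ)^2, with equality when q(θ) ∝ |h(θ)| π(θ). -/
open MeasureTheory

/-- Kahn–Marshall optimality: for any importance sampling density `q` with
`supp π ⊆ supp q`, the variance of the unnormalized estimator `w·h` (with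
`w = π/q`, `θ ~ q`) is at least `(∫|h|π)² − (∫hπ)²`, and this lower bound is
attained by `q*(θ) = |h(θ)|π(θ)/∫|h|π`. -/
theorem stmt_3 {d : ℕ} (Θ : Set (Fin d → ℝ)) (hΘ : MeasurableSet Θ)
    (π h : (Fin d → ℝ) → ℝ)
    (hπm : Measurable π) (hπ0 : ∀ θ, 0 ≤ π θ)
    (hπ1 : ∫ θ in Θ, π θ = 1)
    (hhm : Measurable h)
    (hhπint : IntegrableOn (fun θ => h θ * π θ) Θ)
    (habsint : IntegrableOn (fun θ => |h θ| * π θ) Θ)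
    (hJpos : 0 < ∫ θ in Θ, |h θ| * π θ) :
    -- lower bound on the variance for any admissible density `q`
    (∀ q : (Fin d → ℝ) → ℝ, Measurable q → (∀ θ, 0 ≤ q θ) →
      (∫ θ in Θ, q θ) = 1 →
      Function.support π ⊆ Function.support q →
      IntegrableOn (fun θ => (π θ * h θ / q θ)^2 * q θ) Θ →
      (∫ θ in Θ, (π θ * h θ / q θ)^2 * q θ) - (∫ θ in Θ, h θ * π θ)^2
        ≥ (∫ θ in Θ, |h θ| * π θ)^2 - (∫ θ in Θ, h θ * π θ)^2) ∧
    -- equality for `q* ∝ |h|·π`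
    ((∫ θ in Θ,
        (π θ * h θ / (|h θ| * π θ / (∫ θ' in Θ, |h θ'| * π θ')))^2
          * (|h θ| * π θ / (∫ θ' in Θ, |h θ'| * π θ')))
      - (∫ θ in Θ, h θ * π θ)^2
      = (∫ θ in Θ, |h θ| * π θ)^2 - (∫ θ in Θ, h θ * π θ)^2) := by
  set J : ℝ := ∫ θ in Θ, |h θ| * π θ with hJ
  constructor
  · intro q hqm hq0 hq1 hsupp hint
    have hsub : ∀ θ, q θ = 0 → π θ = 0 := by
      intro θ hq
      by_contra hp
      exact (hsupp hp) hq
    set f : (Fin d → ℝ) → ℝ := fun θ => |π θ * h θ / q θ| * Real.sqrt (q θ) with hf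
    set g : (Fin d → ℝ) → ℝ := fun θ => Real.sqrt (q θ) with hg
    have hfg : ∀ θ, f θ * g θ = |h θ| * π θ := by
      intro θ
      simp only [hf, hg]
      rcases eq_or_ne (q θ) 0 with hq | hq
      · simp [hq, hsub θ hq]
      · rw [mul_assoc, Real.mul_self_sqrt (hq0 θ)]
        rw [abs_div, abs_of_nonneg (hq0 θ), div_mul_cancel₀ _ hq, abs_mul,
          abs_of_nonneg (hπ0 θ), mul_comm]
    have hfsq : ∀ θ, f θ ^ (2:ℝ) = (π θ * h θ / q θ)^2 * q θ := by
      intro θ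
      have hfnn : 0 ≤ f θ := mul_nonneg (abs_nonneg _) (Real.sqrt_nonneg _)
      rw [show ((2:ℝ) = ((2:ℕ):ℝ)) by norm_num, Real.rpow_natCast]
      simp only [hf, mul_pow, sq_abs, Real.sq_sqrt (hq0 θ)]
    have hgsq : ∀ θ, g θ ^ (2:ℝ) = q θ := by
      intro θ
      rw [show ((2:ℝ) = ((2:ℕ):ℝ)) by norm_num, Real.rpow_natCast]
      simp only [hg, Real.sq_sqrt (hq0 θ)]
    have hfm : Measurable f :=
      (((hπm.mul hhm).div hqm).abs).mul (Real.continuous_sqrt.measurable.comp hqm)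
    have hgm : Measurable g := Real.continuous_sqrt.measurable.comp hqm
    have hqint : IntegrableOn q Θ := by
      by_contra hc
      rw [integral_undef hc] at hq1
      norm_num at hq1
    have hfsqn : (fun θ => f θ ^ (2:ℕ)) = fun θ => (π θ * h θ / q θ)^2 * q θ := by
      funext θ
      have := hfsq θ
      rwa [show ((2:ℝ) = ((2:ℕ):ℝ)) by norm_num, Real.rpow_natCast] at this
    have hgsqn : (fun θ => g θ ^ (2:ℕ)) = q := by
      funext θ
      have := hgsq θ
      rwa [show ((2:ℝ) = ((2:ℕ):ℝ)) by norm_num, Real.rpow_natCast] at this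
    have hfmem : MemLp f (ENNReal.ofReal 2) (volume.restrict Θ) := by
      rw [show ENNReal.ofReal 2 = 2 by norm_num]
      rw [memLp_two_iff_integrable_sq (hfm.aestronglyMeasurable)]
      simpa [hfsqn, IntegrableOn] using hint
    have hgmem : MemLp g (ENNReal.ofReal 2) (volume.restrict Θ) := by
      rw [show ENNReal.ofReal 2 = 2 by norm_num]
      rw [memLp_two_iff_integrable_sq (hgm.aestronglyMeasurable)]
      simpa [hgsqn, IntegrableOn] using hqint
    have hpq : (2:ℝ).HolderConjugate 2 := ⟨by norm_num, by norm_num, by norm_num⟩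
    have hle := integral_mul_le_Lp_mul_Lq_of_nonneg (μ := volume.restrict Θ) hpq
      (Filter.Eventually.of_forall fun θ =>
        mul_nonneg (abs_nonneg _) (Real.sqrt_nonneg _))
      (Filter.Eventually.of_forall fun θ => Real.sqrt_nonneg _) hfmem hgmem
    have e1 : ∫ θ in Θ, f θ * g θ = J := by
      rw [hJ]; exact integral_congr_ae (Filter.Eventually.of_forall fun θ => hfg θ)
    have e2 : ∫ θ in Θ, f θ ^ (2:ℝ) = ∫ θ in Θ, (π θ * h θ / q θ)^2 * q θ :=
      integral_congr_ae (Filter.Eventually.of_forall fun θ => hfsq θ)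
    have e3 : ∫ θ in Θ, g θ ^ (2:ℝ) = 1 := by
      rw [← hq1]; exact integral_congr_ae (Filter.Eventually.of_forall fun θ => hgsq θ)
    rw [e1, e2, e3, Real.one_rpow, mul_one] at hle
    set A : ℝ := ∫ θ in Θ, (π θ * h θ / q θ)^2 * q θ with hA
    have hA0 : 0 ≤ A :=
      integral_nonneg fun θ => mul_nonneg (sq_nonneg _) (hq0 θ)
    have hsq : J ^ 2 ≤ A := by
      have h2 := pow_le_pow_left₀ hJpos.le hle 2
      rwa [← Real.rpow_natCast (A ^ ((1:ℝ)/2)) 2, ← Real.rpow_mul hA0,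
        show ((1:ℝ)/2 * ((2:ℕ):ℝ)) = 1 by norm_num, Real.rpow_one] at h2
    linarith
  · have hJne : J ≠ 0 := ne_of_gt hJpos
    have key : (fun θ => (π θ * h θ / (|h θ| * π θ / J))^2 * (|h θ| * π θ / J))
        = fun θ => J * (|h θ| * π θ) := by
      funext θ
      rcases eq_or_ne (|h θ| * π θ) 0 with ha | ha
      · rcases mul_eq_zero.mp ha with h0 | h0
        · have : h θ = 0 := abs_eq_zero.mp h0
          simp [this, ha]
        · simp [h0, ha]
      · have hπh : (π θ * h θ)^2 = (|h θ| * π θ)^2 := by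
          rw [← sq_abs (π θ * h θ), abs_mul, abs_of_nonneg (hπ0 θ), mul_comm]
        rw [div_div_eq_mul_div, div_pow, mul_pow, hπh]
        field_simp
    rw [key, integral_const_mul, ← hJ, sq]
    ring
end

section
/- Let π_j be a probability density on Θ, let θ_{j-1}^{(1)}, ..., θ_{j-1}^{(N)} ∈ Θ be fixed points with positive weights w̄^{(1)}, ..., w̄^{(N)} summing to 1, let q_j(·|·) be a symmetric proposal density, and define on Θ* = Θ \ {θ_{j-1}^{(1)}, ..., θ_{j-1}^{(N)}} the function π̂(θ) = Σ_{i=1}^N w̄^{(i)} q_j(θ|θ_{j-1}^{(i)}) min{1, π_j(θ)/π_j(θ_{j-1}^{(i)})}. Then the function E(θ, ξ) = π_j(θ) π̂(ξ) min{1, (π_j(ξ)π̂(θ))/(π_j(θ)π̂(ξ))} is symmetric in θ and ξ for all θ, ξ ∈ Θ* with π_j(θ), π_j(ξ), π̂(θ), π̂(ξ) > 0; consequently, the AIMS transition kernel satisfies detailed balance with respect to π_j on Θ*. -/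
lemma min_key {a b : ℝ} (ha : 0 < a) (hb : 0 < b) :
    a * min 1 (b / a) = b * min 1 (a / b) := by
  rcases le_total a b with h | h
  · rw [min_eq_left ((one_le_div ha).mpr h), min_eq_right ((div_le_one hb).mpr h)]
    field_simp
  · rw [min_eq_right ((div_le_one ha).mpr h), min_eq_left ((one_le_div hb).mpr h)]
    field_simp

/-- Core of Theorem 1 of the AIMS paper. Let `π_j` be a probability density,
`θ⁽¹⁾,…,θ⁽ᴺ⁾` fixed points with positive normalized weights `w̄`, `q_j` a
symmetric proposal density, and let
`π̂(θ) = ∑ᵢ w̄ⁱ q_j(θ|θ⁽ⁱ⁾) min{1, π_j(θ)/π_j(θ⁽ⁱ⁾)}` on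
`Θ* = Θ \ {θ⁽¹⁾,…,θ⁽ᴺ⁾}`. Then
`E(θ,ξ) = π_j(θ) π̂(ξ) min{1, π_j(ξ)π̂(θ)/(π_j(θ)π̂(ξ))}`
is symmetric in `θ, ξ ∈ Θ*` whenever all quantities involved are positive;
i.e. the AIMS transition kernel satisfies detailed balance w.r.t. `π_j`. -/
theorem stmt_5 {Θ : Type*} (πj : Θ → ℝ) (N : ℕ)
    (pts : Fin N → Θ) (w : Fin N → ℝ)
    (hw : ∀ i, 0 < w i) (hw1 : ∑ i, w i = 1)
    (qj : Θ → Θ → ℝ)  -- `qj θ ξ` is `q_j(θ|ξ)`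
    (hq0 : ∀ θ ξ, 0 ≤ qj θ ξ) (hqsym : ∀ θ ξ, qj θ ξ = qj ξ θ)
    (πhat : Θ → ℝ)
    (hπhat : ∀ θ, πhat θ
      = ∑ i, w i * qj θ (pts i) * min 1 (πj θ / πj (pts i))) :
    ∀ θ ξ, θ ∉ Set.range pts → ξ ∉ Set.range pts →
      0 < πj θ → 0 < πj ξ → 0 < πhat θ → 0 < πhat ξ →
      πj θ * πhat ξ * min 1 (πj ξ * πhat θ / (πj θ * πhat ξ))
        = πj ξ * πhat θ * min 1 (πj θ * πhat ξ / (πj ξ * πhat θ)) := by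
  intro θ ξ _ _ h1 h2 h3 h4
  exact min_key (by positivity) (by positivity)
end

section
/- Let Θ ⊂ ℝ^d be compact, π_j a positive continuous probability density on Θ, points θ^{(1)}, ..., θ^{(N)} ∈ Θ with positive weights w̄^{(i)} summing to 1, and q_j(θ|ξ) = N(θ|ξ, c²I) a Gaussian density. Define π̂(θ) = Σ_i w̄^{(i)} q_j(θ|θ^{(i)}) min{1, π_j(θ)/π_j(θ^{(i)})}. Then π_j(θ) ≤ M π̂(θ) for all θ ∈ Θ \ {θ^{(1)}, ..., θ^{(N)}}, where M = (Σ_i w̄^{(i)} · min_{θ∈Θ} q_j(θ|θ^{(i)}) / max_{θ∈Θ} π_j(θ))^{-1}. -/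
open MeasureTheory

/-- Corollary 1 of the AIMS paper. Let `Θ ⊂ ℝ^d` be compact, `π_j` a positive
continuous probability density on `Θ`, `θ⁽¹⁾,…,θ⁽ᴺ⁾ ∈ Θ` points with positive
weights summing to one, and `q_j(θ|ξ) = N(θ|ξ, c²I)` a Gaussian proposal density.
With `π̂(θ) = ∑ᵢ w̄ⁱ q_j(θ|θ⁽ⁱ⁾) min{1, π_j(θ)/π_j(θ⁽ⁱ⁾)}`, the domination
condition `π_j(θ) ≤ M π̂(θ)` holds on `Θ \ {θ⁽¹⁾,…,θ⁽ᴺ⁾}` with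
`M = (∑ᵢ w̄ⁱ · min_{θ∈Θ} q_j(θ|θ⁽ⁱ⁾) / max_{θ∈Θ} π_j(θ))⁻¹`. -/
theorem stmt_10 {d : ℕ} (Θ : Set (EuclideanSpace ℝ (Fin d)))
    (hΘc : IsCompact Θ) (hΘne : Θ.Nonempty)
    (πj : EuclideanSpace ℝ (Fin d) → ℝ)
    (hπjcont : Continuous πj) (hπjpos : ∀ θ ∈ Θ, 0 < πj θ)
    (hπj1 : ∫ θ in Θ, πj θ = 1)
    (N : ℕ) (pts : Fin N → EuclideanSpace ℝ (Fin d)) (hpts : ∀ i, pts i ∈ Θ)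
    (w : Fin N → ℝ) (hw : ∀ i, 0 < w i) (hw1 : ∑ i, w i = 1)
    (c : ℝ) (hc : 0 < c)
    (qj : EuclideanSpace ℝ (Fin d) → EuclideanSpace ℝ (Fin d) → ℝ)
    (hqj : ∀ θ ξ, qj θ ξ
      = (2 * Real.pi * c ^ 2) ^ (-(d : ℝ) / 2)
        * Real.exp (-‖θ - ξ‖ ^ 2 / (2 * c ^ 2)))
    : ∀ θ ∈ Θ, θ ∉ Set.range pts →
      πj θ ≤ (∑ i, w i * (⨅ θ' : Θ, qj θ' (pts i)) / (⨆ θ' : Θ, πj θ'))⁻¹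
        * (∑ i, w i * qj θ (pts i) * min 1 (πj θ / πj (pts i))) := by
  intro θ hθ _
  haveI : Nonempty Θ := hΘne.to_subtype
  -- positivity of qj
  have hqpos : ∀ (x : EuclideanSpace ℝ (Fin d)) i, 0 < qj x (pts i) := by
    intro x i
    rw [hqj]
    have h1 : (0:ℝ) < 2 * Real.pi * c ^ 2 := by positivity
    positivity
  have hqcont : ∀ i, Continuous fun x => qj x (pts i) := by
    intro i
    have : (fun x => qj x (pts i))
        = fun x => (2 * Real.pi * c ^ 2) ^ (-(d : ℝ) / 2)
          * Real.exp (-‖x - pts i‖ ^ 2 / (2 * c ^ 2)) := by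
      funext x; exact hqj x (pts i)
    rw [this]
    fun_prop
  -- sup of πj
  set P := ⨆ θ' : Θ, πj θ' with hP
  obtain ⟨θmax, hθmaxΘ, hmax⟩ := hΘc.exists_isMaxOn hΘne hπjcont.continuousOn
  have hPbdd : BddAbove (Set.range fun θ' : Θ => πj θ') := by
    refine ⟨πj θmax, ?_⟩
    rintro x ⟨a, rfl⟩
    exact hmax a.2
  have hPge : ∀ x ∈ Θ, πj x ≤ P := fun x hx => le_ciSup hPbdd ⟨x, hx⟩
  have hPpos : 0 < P := lt_of_lt_of_le (hπjpos θ hθ) (hPge θ hθ)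
  -- inf of qj
  have hQbdd : ∀ i, BddBelow (Set.range fun θ' : Θ => qj θ' (pts i)) := by
    intro i
    refine ⟨0, ?_⟩
    rintro x ⟨a, rfl⟩
    exact (hqpos a i).le
  have hQle : ∀ i, (⨅ θ' : Θ, qj θ' (pts i)) ≤ qj θ (pts i) :=
    fun i => ciInf_le (hQbdd i) ⟨θ, hθ⟩
  have hQpos : ∀ i, 0 < ⨅ θ' : Θ, qj θ' (pts i) := by
    intro i
    obtain ⟨θm, hθmΘ, hmin⟩ := hΘc.exists_isMinOn hΘne (hqcont i).continuousOn
    exact lt_of_lt_of_le (hqpos θm i) (le_ciInf fun a => hmin a.2)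
  -- N positive
  have hN : Nonempty (Fin N) := by
    by_contra h
    rw [not_nonempty_iff] at h
    rw [Finset.univ_eq_empty, Finset.sum_empty] at hw1
    norm_num at hw1
  have hπθ : 0 < πj θ := hπjpos θ hθ
  set S := ∑ i, w i * (⨅ θ' : Θ, qj θ' (pts i)) / P with hSdef
  have hSpos : 0 < S := by
    apply Finset.sum_pos _ Finset.univ_nonempty
    intro i _
    have := hQpos i
    have := hw i
    positivity
  have key : S * πj θ ≤ ∑ i, w i * qj θ (pts i) * min 1 (πj θ / πj (pts i)) := by
    rw [Finset.sum_mul]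
    apply Finset.sum_le_sum
    intro i _
    have hπi : 0 < πj (pts i) := hπjpos (pts i) (hpts i)
    have hminle : πj θ / P ≤ min 1 (πj θ / πj (pts i)) := by
      apply le_min
      · rw [div_le_one hPpos]; exact hPge θ hθ
      · exact div_le_div_of_nonneg_left hπθ.le hπi (hPge (pts i) (hpts i))
    have h1 : w i * (⨅ θ' : Θ, qj θ' (pts i)) / P * πj θ
        = w i * (⨅ θ' : Θ, qj θ' (pts i)) * (πj θ / P) := by ring
    rw [h1]
    apply mul_le_mul
    · exact mul_le_mul_of_nonneg_left (hQle i) (hw i).le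
    · exact hminle
    · positivity
    · have := hqpos θ i
      have := hw i
      positivity
  calc πj θ = S⁻¹ * (S * πj θ) := by field_simp
    _ ≤ S⁻¹ * ∑ i, w i * qj θ (pts i) * min 1 (πj θ / πj (pts i)) :=
        mul_le_mul_of_nonneg_left key (by positivity)
end

section
/- Let π be a probability density on Θ and π̂ a probability density on Θ satisfying π(θ) ≤ M π̂(θ) for all θ, with M ≥ 1. Then the expected acceptance probability of the Independent Metropolis–Hastings algorithm at stationarity, Ā = ∫∫ π(θ) π̂(ξ) min{1, (π(ξ)π̂(θ))/(π(θ)π̂(ξ))} dξ dθ, satisfies Ā ≥ 1/M. -/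
open MeasureTheory

/-- Lower bound in Theorem 3 of the AIMS paper: if the target density `π` is
dominated by `M` times the proposal density `π̂` (with `M ≥ 1`), then the
expected acceptance probability of Independent Metropolis–Hastings at
stationarity, `Ā = ∫∫ π(θ) π̂(ξ) min{1, π(ξ)π̂(θ)/(π(θ)π̂(ξ))} dξ dθ`,
satisfies `Ā ≥ 1/M`. -/
theorem stmt_12 {α : Type*} [MeasurableSpace α] (μ : Measure α) [SigmaFinite μ]
    (π πhat : α → ℝ)
    (hπm : Measurable π) (hπhatm : Measurable πhat)
    (hπ0 : ∀ θ, 0 ≤ π θ) (hπhat0 : ∀ θ, 0 ≤ πhat θ)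
    (hπ1 : ∫ θ, π θ ∂μ = 1) (hπhat1 : ∫ θ, πhat θ ∂μ = 1)
    (hπint : Integrable π μ) (hπhatint : Integrable πhat μ)
    (M : ℝ) (hM : 1 ≤ M)
    (hdom : ∀ θ, π θ ≤ M * πhat θ) :
    (1 : ℝ) / M ≤ ∫ θ, (∫ ξ, π θ * πhat ξ
        * min 1 (π ξ * πhat θ / (π θ * πhat ξ)) ∂μ) ∂μ := by
  have hM0 : (0 : ℝ) < M := lt_of_lt_of_le one_pos hM
  set f : α → α → ℝ := fun θ ξ => π θ * πhat ξ * min 1 (π ξ * πhat θ / (π θ * πhat ξ))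
    with hf
  -- nonnegativity of f
  have hfnn : ∀ θ ξ, 0 ≤ f θ ξ := by
    intro θ ξ
    apply mul_nonneg (mul_nonneg (hπ0 θ) (hπhat0 ξ))
    exact le_min zero_le_one (div_nonneg (mul_nonneg (hπ0 ξ) (hπhat0 θ))
      (mul_nonneg (hπ0 θ) (hπhat0 ξ)))
  -- upper bound f θ ξ ≤ π θ * πhat ξ
  have hfub : ∀ θ ξ, f θ ξ ≤ π θ * πhat ξ := by
    intro θ ξ
    have := mul_nonneg (hπ0 θ) (hπhat0 ξ)
    calc f θ ξ ≤ π θ * πhat ξ * 1 :=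
          mul_le_mul_of_nonneg_left (min_le_left _ _) this
      _ = π θ * πhat ξ := mul_one _
  -- key pointwise bound
  have key : ∀ θ ξ, π θ * π ξ / M ≤ f θ ξ := by
    intro θ ξ
    rcases eq_or_lt_of_le (mul_nonneg (hπ0 θ) (hπhat0 ξ)) with h | h
    · -- π θ * πhat ξ = 0
      have hzero : π θ * π ξ = 0 := by
        rcases mul_eq_zero.mp h.symm with h1 | h1
        · simp [h1]
        · have h2 := hdom ξ
          have : π ξ = 0 := le_antisymm (by nlinarith) (hπ0 ξ)
          simp [this]
      rw [hzero]
      simpa using hfnn θ ξ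
    · have hne : π θ * πhat ξ ≠ 0 := ne_of_gt h
      have heq : f θ ξ = min (π θ * πhat ξ) (π ξ * πhat θ) := by
        rw [hf]
        simp only
        rw [mul_min_of_nonneg _ _ (le_of_lt h), mul_one]
        congr 1
        field_simp
        rw [mul_assoc, mul_div_cancel_left₀ _ hne]
      rw [heq]
      apply le_min
      · have h1 := hdom ξ
        have := hπ0 θ
        rw [div_le_iff₀ hM0]
        nlinarith
      · have h1 := hdom θ
        have := hπ0 ξ
        rw [div_le_iff₀ hM0]
        nlinarith
  -- measurability of the min term
  have hmin : ∀ θ, Measurable fun ξ => min 1 (π ξ * πhat θ / (π θ * πhat ξ)) := by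
    intro θ
    exact measurable_const.min ((hπm.mul measurable_const).div
      (measurable_const.mul hπhatm))
  -- integrability of f θ
  have hfint : ∀ θ, Integrable (f θ) μ := by
    intro θ
    apply Integrable.mono' (hπhatint.const_mul (π θ))
    · exact ((measurable_const.mul hπhatm).mul (hmin θ)).aestronglyMeasurable
    · filter_upwards with ξ
      rw [Real.norm_eq_abs, abs_of_nonneg (hfnn θ ξ)]
      exact hfub θ ξ
  -- inner integral lower bound
  have hinner : ∀ θ, π θ / M ≤ ∫ ξ, f θ ξ ∂μ := by
    intro θ
    have h1 : (∫ ξ, π θ * π ξ / M ∂μ) ≤ ∫ ξ, f θ ξ ∂μ := by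
      apply integral_mono ((hπint.const_mul (π θ)).div_const M) (hfint θ)
      intro ξ; exact key θ ξ
    calc π θ / M = ∫ ξ, π θ * π ξ / M ∂μ := by
          rw [integral_div, integral_const_mul, hπ1, mul_one]
      _ ≤ _ := h1
  -- inner integral upper bound
  have hinnerub : ∀ θ, (∫ ξ, f θ ξ ∂μ) ≤ π θ := by
    intro θ
    have h1 : (∫ ξ, f θ ξ ∂μ) ≤ ∫ ξ, π θ * πhat ξ ∂μ :=
      integral_mono (hfint θ) (hπhatint.const_mul (π θ)) (hfub θ)
    calc (∫ ξ, f θ ξ ∂μ) ≤ ∫ ξ, π θ * πhat ξ ∂μ := h1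
      _ = π θ := by rw [integral_const_mul, hπhat1, mul_one]
  -- measurability of the inner-integral function
  have hFmeas : StronglyMeasurable fun θ => ∫ ξ, f θ ξ ∂μ := by
    have hunc : StronglyMeasurable (Function.uncurry f) := by
      apply Measurable.stronglyMeasurable
      exact ((hπm.comp measurable_fst).mul (hπhatm.comp measurable_snd)).mul
        (measurable_const.min (((hπm.comp measurable_snd).mul
          (hπhatm.comp measurable_fst)).div
          ((hπm.comp measurable_fst).mul (hπhatm.comp measurable_snd))))
    exact hunc.integral_prod_right
  -- integrability of the inner-integral function
  have hFint : Integrable (fun θ => ∫ ξ, f θ ξ ∂μ) μ := by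
    apply Integrable.mono' hπint hFmeas.aestronglyMeasurable
    filter_upwards with θ
    rw [Real.norm_eq_abs, abs_of_nonneg (integral_nonneg (hfnn θ))]
    exact hinnerub θ
  calc (1 : ℝ) / M = ∫ θ, π θ / M ∂μ := by rw [integral_div, hπ1]
    _ ≤ ∫ θ, (∫ ξ, f θ ξ ∂μ) ∂μ :=
        integral_mono (hπint.div_const M) hFint hinner
    _ = _ := rfl
end

section
/- Let π_j be a probability density on Θ, fixed points θ^{(1)},...,θ^{(N)} with positive weights w̄^{(i)} summing to 1, q_j a symmetric proposal density, and define π̂(ξ) = Σ_i w̄^{(i)} q_j(ξ|θ^{(i)}) min{1, π_j(ξ)/π_j(θ^{(i)})}. Then the expected acceptance probability of the AIMS chain at stationarity, Ā = ∫∫ π_j(θ) π̂(ξ) min{1, (π_j(ξ)π̂(θ))/(π_j(θ)π̂(ξ))} dξ dθ, is at most Σ_{i=1}^N w̄^{(i)} a_j(θ^{(i)}), where a_j(η) = ∫ q_j(ξ|η) min{1, π_j(ξ)/π_j(η)} dξ is the local RWMH acceptance probability at η. -/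
open MeasureTheory

/-- Upper bound in Theorem 3 of the AIMS paper: the expected (global) acceptance
probability of the AIMS chain at stationarity is at most the weighted local
random-walk Metropolis–Hastings acceptance rate `∑ᵢ w̄ⁱ a_j(θ⁽ⁱ⁾)`, where
`a_j(η) = ∫ q_j(ξ|η) min{1, π_j(ξ)/π_j(η)} dξ` and the global proposal is
`π̂(ξ) = ∑ᵢ w̄ⁱ q_j(ξ|θ⁽ⁱ⁾) min{1, π_j(ξ)/π_j(θ⁽ⁱ⁾)}`. -/
theorem stmt_13 {α : Type*} [MeasurableSpace α] (μ : Measure α) [SigmaFinite μ]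
    (πj : α → ℝ) (hπjm : Measurable πj) (hπjpos : ∀ θ, 0 < πj θ)
    (hπj1 : ∫ θ, πj θ ∂μ = 1) (hπjint : Integrable πj μ)
    (N : ℕ) (pts : Fin N → α)
    (w : Fin N → ℝ) (hw : ∀ i, 0 < w i) (hw1 : ∑ i, w i = 1)
    (qj : α → α → ℝ)  -- `qj ξ η` is `q_j(ξ|η)`
    (hqm : Measurable (Function.uncurry qj))
    (hq0 : ∀ ξ η, 0 ≤ qj ξ η) (hqsym : ∀ ξ η, qj ξ η = qj η ξ)
    (hqint : ∀ η, Integrable (fun ξ => qj ξ η) μ)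
    (hq1 : ∀ η, ∫ ξ, qj ξ η ∂μ = 1)
    (πhat : α → ℝ)
    (hπhat : ∀ ξ, πhat ξ
      = ∑ i, w i * qj ξ (pts i) * min 1 (πj ξ / πj (pts i))) :
    ∫ θ, (∫ ξ, πj θ * πhat ξ
        * min 1 (πj ξ * πhat θ / (πj θ * πhat ξ)) ∂μ) ∂μ
      ≤ ∑ i, w i * ∫ ξ, qj ξ (pts i) * min 1 (πj ξ / πj (pts i)) ∂μ := by
  -- basic facts
  have hqmeas : ∀ η, Measurable (fun ξ => qj ξ η) := fun η =>
    hqm.comp (measurable_id.prodMk measurable_const)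
  have hterm_int : ∀ i, Integrable (fun ξ => qj ξ (pts i) * min 1 (πj ξ / πj (pts i))) μ := by
    intro i
    refine (hqint (pts i)).mono ?_ ?_
    · exact ((hqmeas (pts i)).mul (measurable_const.min (hπjm.div measurable_const))).aestronglyMeasurable
    · filter_upwards with ξ
      have h0 : 0 ≤ min 1 (πj ξ / πj (pts i)) :=
        le_min zero_le_one (div_nonneg (hπjpos ξ).le (hπjpos (pts i)).le)
      have h1 : min 1 (πj ξ / πj (pts i)) ≤ 1 := min_le_left _ _
      simp only [Real.norm_eq_abs, abs_mul, abs_of_nonneg (hq0 ξ (pts i)), abs_of_nonneg h0]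
      nlinarith [hq0 ξ (pts i)]
  have hπhat_int : Integrable πhat μ := by
    have : πhat = fun ξ => ∑ i, w i * (qj ξ (pts i) * min 1 (πj ξ / πj (pts i))) := by
      funext ξ; rw [hπhat ξ]; simp [mul_assoc]
    rw [this]
    exact integrable_finset_sum _ fun i _ => ((hterm_int i).const_mul (w i))
  have hπhat0 : ∀ ξ, 0 ≤ πhat ξ := by
    intro ξ; rw [hπhat ξ]
    refine Finset.sum_nonneg fun i _ => ?_
    exact mul_nonneg (mul_nonneg (hw i).le (hq0 _ _))
      (le_min zero_le_one (div_nonneg (hπjpos ξ).le (hπjpos (pts i)).le))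
  set C : ℝ := ∫ ξ, πhat ξ ∂μ with hC
  have hC0 : 0 ≤ C := integral_nonneg hπhat0
  -- step 1: inner integral bound
  have hinner : ∀ θ, (∫ ξ, πj θ * πhat ξ
      * min 1 (πj ξ * πhat θ / (πj θ * πhat ξ)) ∂μ) ≤ πj θ * C := by
    intro θ
    have hmono : (∫ ξ, πj θ * πhat ξ * min 1 (πj ξ * πhat θ / (πj θ * πhat ξ)) ∂μ)
        ≤ ∫ ξ, πj θ * πhat ξ ∂μ := by
      refine integral_mono_of_nonneg ?_ (hπhat_int.const_mul (πj θ)) ?_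
      · filter_upwards with ξ
        exact mul_nonneg (mul_nonneg (hπjpos θ).le (hπhat0 ξ))
          (le_min zero_le_one (div_nonneg (mul_nonneg (hπjpos ξ).le (hπhat0 θ))
            (mul_nonneg (hπjpos θ).le (hπhat0 ξ))))
      · filter_upwards with ξ
        have := min_le_left 1 (πj ξ * πhat θ / (πj θ * πhat ξ))
        nlinarith [mul_nonneg (hπjpos θ).le (hπhat0 ξ)]
    calc _ ≤ ∫ ξ, πj θ * πhat ξ ∂μ := hmono
      _ = πj θ * C := by rw [integral_const_mul]
  -- step 2: outer bound
  have houter : (∫ θ, (∫ ξ, πj θ * πhat ξ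
      * min 1 (πj ξ * πhat θ / (πj θ * πhat ξ)) ∂μ) ∂μ) ≤ ∫ θ, πj θ * C ∂μ := by
    refine integral_mono_of_nonneg ?_ (hπjint.mul_const C) ?_
    · filter_upwards with θ
      refine integral_nonneg fun ξ => ?_
      exact mul_nonneg (mul_nonneg (hπjpos θ).le (hπhat0 ξ))
        (le_min zero_le_one (div_nonneg (mul_nonneg (hπjpos ξ).le (hπhat0 θ))
          (mul_nonneg (hπjpos θ).le (hπhat0 ξ))))
    · filter_upwards with θ using hinner θ
  have hCval : C = ∑ i, w i * ∫ ξ, qj ξ (pts i) * min 1 (πj ξ / πj (pts i)) ∂μ := by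
    rw [hC]
    have : (fun ξ => πhat ξ) = fun ξ => ∑ i, w i * (qj ξ (pts i) * min 1 (πj ξ / πj (pts i))) := by
      funext ξ; rw [hπhat ξ]; simp [mul_assoc]
    rw [this, integral_finset_sum _ fun i _ => ((hterm_int i).const_mul (w i))]
    simp [integral_const_mul]
  calc _ ≤ ∫ θ, πj θ * C ∂μ := houter
    _ = C := by rw [integral_mul_const, hπj1, one_mul]
    _ = _ := hCval
end
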